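/- Let f : ℝ → ℝ be twice continuously differentiable and θ_j the B-spline as above, j ≥ 2, with T^{h,j} f(x) = (1/h)∫ f(t)θ_j((x-t)/h) dt. Then the second central difference quotient of T^{h,j-2} f equals the mollified second derivative: (T^{h,j-2}f(x+h) - 2·T^{h,j-2}f(x) + T^{h,j-2}f(x-h))/h² = T^{h,j}(f'')(x) for all x ∈ ℝ, where T^{h,0} is understood as the identity when j = 2. -/

import Mathlib

open MeasureTheory

/-- The indicator function of [-1/2, 1/2]. -/
noncomputable def theta1 : ℝ → ℝ := fun x => if x ∈ Set.Icc (-(1/2) : ℝ) (1/2) then 1 else 0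

/-- The centered B-spline of degree j-1: θ_1 = 1_{[-1/2,1/2]}, θ_{j+1} = θ_j * θ_1. -/
noncomputable def theta : ℕ → ℝ → ℝ
  | 0 => fun _ => 0
  | 1 => theta1
  | j + 2 => fun x => ∫ t : ℝ, theta (j + 1) (x - t) * theta1 t

/-- The smoothing operator T^{h,j} f = (1/h) f * θ_j(·/h), with T^{h,0} = id. -/
noncomputable def Tsm (h : ℝ) (j : ℕ) (f : ℝ → ℝ) : ℝ → ℝ :=
  if j = 0 then f else fun x => (1 / h) * ∫ t : ℝ, f t * theta j ((x - t) / h)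

section Helpers

lemma theta1_nonneg (x : ℝ) : 0 ≤ theta1 x := by unfold theta1; split <;> norm_num

lemma theta1_le_one (x : ℝ) : theta1 x ≤ 1 := by unfold theta1; split <;> norm_num

lemma theta1_eq_zero {x : ℝ} (hx : 1/2 < |x|) : theta1 x = 0 := by
  unfold theta1
  rw [if_neg]
  intro hmem
  rw [Set.mem_Icc] at hmem
  rcases abs_cases x with ⟨h1, _⟩ | ⟨h1, _⟩ <;> linarith

lemma abs_le_of_theta1_ne {x : ℝ} (hx : theta1 x ≠ 0) : |x| ≤ 1/2 := by
  by_contra hc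
  exact hx (theta1_eq_zero (by push_neg at hc; exact hc))

lemma measurable_theta1 : Measurable theta1 :=
  Measurable.ite measurableSet_Icc measurable_const measurable_const

lemma theta1_eq_indicator :
    theta1 = Set.indicator (Set.Icc (-(1/2) : ℝ) (1/2)) (fun _ => 1) := by
  funext x; simp [theta1, Set.indicator_apply]

lemma integrable_theta1 : Integrable theta1 := by
  rw [theta1_eq_indicator]
  exact (integrableOn_const (by rw [Real.volume_Icc]; exact ENNReal.ofReal_ne_top)).integrable_indicator measurableSet_Icc

lemma integral_theta1 : ∫ t : ℝ, theta1 t = 1 := by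
  rw [theta1_eq_indicator, MeasureTheory.integral_indicator measurableSet_Icc,
    setIntegral_const, measureReal_def, Real.volume_Icc, smul_eq_mul, mul_one]
  norm_num

lemma theta_two_eq (y : ℝ) : theta 2 y = ∫ t : ℝ, theta1 (y - t) * theta1 t := by
  show theta (0 + 2) y = _
  simp [theta]

lemma measurable_theta : ∀ k, Measurable (theta k)
  | 0 => measurable_const
  | 1 => measurable_theta1
  | (k + 2) => by
    have h1 := measurable_theta (k + 1)
    have h2 : StronglyMeasurable (fun p : ℝ × ℝ => theta (k+1) (p.1 - p.2) * theta1 p.2) :=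
      ((h1.comp (measurable_fst.sub measurable_snd)).mul
        (measurable_theta1.comp measurable_snd)).stronglyMeasurable
    exact h2.integral_prod_right'.measurable

lemma theta_mem_Icc : ∀ (k : ℕ) (x : ℝ), theta k x ∈ Set.Icc (0:ℝ) 1
  | 0, x => by simp [theta]
  | 1, x => ⟨theta1_nonneg x, theta1_le_one x⟩
  | (k + 2), x => by
    have hint : Integrable (fun t => theta (k+1) (x - t) * theta1 t) := by
      apply integrable_theta1.mono'
      · exact (((measurable_theta (k+1)).comp (measurable_const.sub measurable_id)).mul
          measurable_theta1).aestronglyMeasurable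
      · filter_upwards with t
        simp only [norm_mul, Real.norm_eq_abs]
        rw [abs_of_nonneg (theta_mem_Icc (k+1) (x - t)).1, abs_of_nonneg (theta1_nonneg t)]
        exact mul_le_of_le_one_left (theta1_nonneg t) (theta_mem_Icc (k+1) (x - t)).2
    constructor
    · exact integral_nonneg fun t =>
        mul_nonneg (theta_mem_Icc (k+1) (x - t)).1 (theta1_nonneg t)
    · show (∫ t : ℝ, theta (k+1) (x - t) * theta1 t) ≤ 1
      calc (∫ t : ℝ, theta (k+1) (x - t) * theta1 t) ≤ ∫ t : ℝ, theta1 t := by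
            apply integral_mono hint integrable_theta1
            intro t
            exact mul_le_of_le_one_left (theta1_nonneg t) (theta_mem_Icc (k+1) (x - t)).2
        _ = 1 := integral_theta1

lemma theta_eq_zero : ∀ (k : ℕ) {x : ℝ}, (k : ℝ)/2 < |x| → theta k x = 0
  | 0, x, _ => by simp [theta]
  | 1, x, hx => theta1_eq_zero (by norm_num at hx ⊢; linarith)
  | (k + 2), x, hx => by
    show (∫ t : ℝ, theta (k+1) (x - t) * theta1 t) = 0
    rw [show (fun t => theta (k+1) (x - t) * theta1 t) = fun _ => (0:ℝ) from funext fun t => ?_,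
      integral_zero]
    by_cases ht : theta1 t = 0
    · rw [ht, mul_zero]
    · have h1 : |t| ≤ 1/2 := abs_le_of_theta1_ne ht
      have h2 : ((k+1 : ℕ) : ℝ)/2 < |x - t| := by
        push_cast at hx ⊢
        linarith [abs_sub_abs_le_abs_sub x t]
      rw [theta_eq_zero (k+1) h2, zero_mul]

lemma abs_le_of_theta_ne {k : ℕ} {x : ℝ} (hx : theta k x ≠ 0) : |x| ≤ (k : ℝ)/2 := by
  by_contra hc
  exact hx (theta_eq_zero k (by push_neg at hc; exact hc))

lemma theta2_eq (y : ℝ) : theta 2 y = max (1 - |y|) 0 := by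
  rw [theta_two_eq]
  have h2 : (fun t => theta1 (y - t) * theta1 t)
      = Set.indicator (Set.Icc (max (y - 1/2) (-(1/2))) (min (y + 1/2) (1/2))) (fun _ => (1:ℝ)) := by
    funext t
    show (if _ ∈ Set.Icc _ _ then (1:ℝ) else 0) * (if _ ∈ Set.Icc _ _ then (1:ℝ) else 0) = _
    simp only [Set.indicator_apply, Set.mem_Icc, max_le_iff, le_min_iff]
    by_cases hA : (-(1/2):ℝ) ≤ y - t ∧ y - t ≤ 1/2 <;>
      by_cases hB : (-(1/2):ℝ) ≤ t ∧ t ≤ 1/2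
    · rw [if_pos hA, if_pos hB, if_pos ⟨⟨by linarith [hA.2], hB.1⟩, by linarith [hA.1], hB.2⟩]
      norm_num
    · rw [if_pos hA, if_neg hB, if_neg]
      · norm_num
      · rintro ⟨⟨_, b⟩, _, d⟩; exact hB ⟨b, d⟩
    · rw [if_neg hA, if_pos hB, if_neg]
      · norm_num
      · rintro ⟨⟨a, _⟩, c, _⟩; exact hA ⟨by linarith, by linarith⟩
    · rw [if_neg hA, if_neg hB, if_neg]
      · norm_num
      · rintro ⟨⟨_, b⟩, _, d⟩; exact hB ⟨b, d⟩
  rw [h2, MeasureTheory.integral_indicator measurableSet_Icc, setIntegral_const, smul_eq_mul,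
    mul_one, measureReal_def, Real.volume_Icc, ENNReal.toReal_ofReal']
  congr 1
  rcases le_total y 0 with hy | hy
  · rw [abs_of_nonpos hy, min_eq_left (by linarith), max_eq_right (by linarith)]; ring
  · rw [abs_of_nonneg hy, min_eq_right (by linarith), max_eq_left (by linarith)]; ring

lemma continuous_theta2 : Continuous (theta 2) := by
  have : theta 2 = fun y => max (1 - |y|) 0 := funext theta2_eq
  rw [this]
  exact (continuous_const.sub continuous_abs).max continuous_const

lemma Tsm_zero (h : ℝ) (f : ℝ → ℝ) : Tsm h 0 f = f := by simp [Tsm]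

lemma Tsm_apply (h : ℝ) (k : ℕ) (hk : k ≠ 0) (f : ℝ → ℝ) (x : ℝ) :
    Tsm h k f x = (1/h) * ∫ t : ℝ, f t * theta k ((x - t)/h) := by
  simp [Tsm, hk]

lemma integral_comp_affine (h : ℝ) (hh : 0 < h) (x : ℝ) (F : ℝ → ℝ) :
    (∫ t : ℝ, F t) = h * ∫ u : ℝ, F (x - h * u) := by
  have h1 : (∫ u : ℝ, F (x - h * u)) = |h⁻¹| • ∫ u : ℝ, F (x - u) :=
    Measure.integral_comp_mul_left (fun u => F (x - u)) h
  have h2 : (∫ u : ℝ, F (x - u)) = ∫ u : ℝ, F u := by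
    simp_rw [sub_eq_add_neg]
    calc (∫ u : ℝ, F (x + -u)) = ∫ u : ℝ, F (x + u) :=
          integral_neg_eq_self (fun u => F (x + u)) volume
      _ = ∫ u : ℝ, F u := integral_add_left_eq_self (μ := volume) (fun u => F u) x
  rw [h1, h2, abs_of_pos (inv_pos.2 hh), smul_eq_mul, ← mul_assoc,
    mul_inv_cancel₀ (ne_of_gt hh), one_mul]

lemma Tsm_one_rep (h : ℝ) (hh : 0 < h) (f : ℝ → ℝ) (x : ℝ) :
    Tsm h 1 f x = ∫ u : ℝ, f (x - h * u) * theta1 u := by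
  rw [Tsm_apply h 1 one_ne_zero,
    integral_comp_affine h hh x (fun t => f t * theta 1 ((x - t)/h))]
  have harg : ∀ u : ℝ, (x - (x - h * u))/h = u := fun u => by
    field_simp
    ring
  have : (fun u : ℝ => f (x - h * u) * theta 1 ((x - (x - h * u))/h))
      = fun u : ℝ => f (x - h * u) * theta1 u := by
    funext u; rw [harg u]; rfl
  rw [this, ← mul_assoc, one_div, inv_mul_cancel₀ (ne_of_gt hh), one_mul]

lemma integrable_kernel (h : ℝ) (hh : 0 < h) (f : ℝ → ℝ) (hf : Continuous f) (k : ℕ) (y : ℝ) :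
    Integrable (fun t => f t * theta k ((y - t)/h)) := by
  obtain ⟨M, hM⟩ := (isCompact_Icc (a := y - k*h/2) (b := y + k*h/2)).exists_bound_of_continuousOn
    hf.continuousOn
  apply Integrable.mono' (g := (Set.Icc (y - k*h/2) (y + k*h/2)).indicator fun _ => M)
  · exact (integrableOn_const
      (by rw [Real.volume_Icc]; exact ENNReal.ofReal_ne_top)).integrable_indicator
      measurableSet_Icc
  · exact (hf.measurable.mul ((measurable_theta k).comp (by fun_prop))).aestronglyMeasurable
  · filter_upwards with t
    by_cases ht : t ∈ Set.Icc (y - k*h/2) (y + k*h/2)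
    · rw [Set.indicator_of_mem ht]
      calc ‖f t * theta k ((y - t)/h)‖ = ‖f t‖ * |theta k ((y - t)/h)| := by
            rw [norm_mul]; rfl
        _ ≤ M * 1 := by
            apply mul_le_mul (hM t ht) _ (abs_nonneg _)
              (le_trans (norm_nonneg (f t)) (hM t ht))
            rw [abs_of_nonneg (theta_mem_Icc k _).1]
            exact (theta_mem_Icc k _).2
        _ = M := mul_one M
    · rw [Set.indicator_of_notMem ht]
      have hz : theta k ((y - t)/h) = 0 := by
        apply theta_eq_zero
        rw [Set.mem_Icc, not_and_or] at ht
        rw [abs_div, abs_of_pos hh, lt_div_iff₀ hh]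
        rcases ht with ht | ht <;> push_neg at ht <;> rcases abs_cases (y - t) with ⟨he, _⟩ | ⟨he, _⟩ <;>
          rw [he] <;> linarith
      rw [hz, mul_zero, norm_zero]

lemma measurable_Tsm (h : ℝ) (f : ℝ → ℝ) (hf : Measurable f) (k : ℕ) :
    Measurable (Tsm h k f) := by
  rcases eq_or_ne k 0 with rfl | hk
  · rw [Tsm_zero]; exact hf
  · have : Tsm h k f = fun x => (1/h) * ∫ t : ℝ, f t * theta k ((x - t)/h) :=
      funext fun x => Tsm_apply h k hk f x
    rw [this]
    apply Measurable.const_mul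
    have h2 : StronglyMeasurable (fun p : ℝ × ℝ => f p.2 * theta k ((p.1 - p.2)/h)) :=
      ((hf.comp measurable_snd).mul
        ((measurable_theta k).comp (by fun_prop))).stronglyMeasurable
    exact h2.integral_prod_right'.measurable

lemma Tsm_bound (h : ℝ) (hh : 0 < h) (f : ℝ → ℝ) (hf : Continuous f) (k : ℕ) (a b : ℝ) :
    ∃ C, ∀ y ∈ Set.Icc a b, |Tsm h k f y| ≤ C := by
  rcases eq_or_ne k 0 with rfl | hk
  · obtain ⟨M, hM⟩ := (isCompact_Icc (a := a) (b := b)).exists_bound_of_continuousOn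
      hf.continuousOn
    exact ⟨M, fun y hy => by rw [Tsm_zero]; exact hM y hy⟩
  · obtain ⟨M, hM⟩ := (isCompact_Icc (a := a - k*h/2) (b := b + k*h/2)).exists_bound_of_continuousOn
      hf.continuousOn
    set A := a - k*h/2
    set B := b + k*h/2
    refine ⟨(1/h) * (max M 0 * max (B - A) 0), fun y hy => ?_⟩
    rw [Tsm_apply h k hk, abs_mul, abs_of_pos (by positivity : (0:ℝ) < 1/h)]
    apply mul_le_mul_of_nonneg_left _ (by positivity)
    calc |∫ t : ℝ, f t * theta k ((y - t)/h)| ≤ ∫ t : ℝ, ‖f t * theta k ((y - t)/h)‖ := by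
          rw [← Real.norm_eq_abs]; exact norm_integral_le_integral_norm _
      _ ≤ ∫ t : ℝ, (Set.Icc A B).indicator (fun _ => max M 0) t := by
          apply integral_mono (integrable_kernel h hh f hf k y).norm
          · exact (integrableOn_const
              (by rw [Real.volume_Icc]; exact ENNReal.ofReal_ne_top)).integrable_indicator
              measurableSet_Icc
          · intro t
            show ‖f t * theta k ((y - t)/h)‖ ≤ (Set.Icc A B).indicator (fun _ => max M 0) t
            by_cases ht : t ∈ Set.Icc A B
            · rw [Set.indicator_of_mem ht]
              calc ‖f t * theta k ((y - t)/h)‖ = ‖f t‖ * |theta k ((y - t)/h)| := by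
                    rw [norm_mul]; rfl
                _ ≤ max M 0 * 1 := by
                    apply mul_le_mul (le_trans (hM t ht) (le_max_left M 0)) _ (abs_nonneg _)
                      (le_max_right M 0)
                    rw [abs_of_nonneg (theta_mem_Icc k _).1]
                    exact (theta_mem_Icc k _).2
                _ = max M 0 := mul_one _
            · rw [Set.indicator_of_notMem ht]
              have hz : theta k ((y - t)/h) = 0 := by
                apply theta_eq_zero
                rw [Set.mem_Icc, not_and_or] at ht
                rw [Set.mem_Icc] at hy
                rw [abs_div, abs_of_pos hh, lt_div_iff₀ hh]
                rcases ht with ht | ht <;> push_neg at ht <;>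
                  rcases abs_cases (y - t) with ⟨he, _⟩ | ⟨he, _⟩ <;>
                  rw [he] <;> simp only [A, B] at ht <;> cases hy <;> linarith
              rw [hz, mul_zero, norm_zero]
      _ = max M 0 * max (B - A) 0 := by
          rw [MeasureTheory.integral_indicator measurableSet_Icc, setIntegral_const,
            measureReal_def, Real.volume_Icc, ENNReal.toReal_ofReal', smul_eq_mul, mul_comm]

lemma integrable_Tsm_slice (h : ℝ) (hh : 0 < h) (f : ℝ → ℝ) (hf : Continuous f) (k : ℕ) (c : ℝ) :
    Integrable (fun s => Tsm h k f (c - h * s) * theta1 s) := by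
  obtain ⟨C, hC⟩ := Tsm_bound h hh f hf k (c - h/2) (c + h/2)
  have hC0 : 0 ≤ C := le_trans (abs_nonneg _) (hC c ⟨by linarith, by linarith⟩)
  apply Integrable.mono' (integrable_theta1.const_mul C)
  · exact (((measurable_Tsm h f hf.measurable k).comp (by fun_prop)).mul
      measurable_theta1).aestronglyMeasurable
  · filter_upwards with s
    by_cases hs : theta1 s = 0
    · simp [hs]
    · have h1 : |s| ≤ 1/2 := abs_le_of_theta1_ne hs
      have h2 : c - h * s ∈ Set.Icc (c - h/2) (c + h/2) := by
        rw [Set.mem_Icc]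
        rcases abs_cases s with ⟨he, _⟩ | ⟨he, _⟩ <;> rw [he] at h1 <;> constructor <;> nlinarith
      rw [norm_mul, Real.norm_eq_abs, Real.norm_eq_abs, abs_of_nonneg (theta1_nonneg s)]
      exact mul_le_mul (hC _ h2) le_rfl (theta1_nonneg s) hC0

end Helpers

section Base

lemma base_case (h : ℝ) (hh : 0 < h) (f : ℝ → ℝ) (hf : ContDiff ℝ 2 f) (x : ℝ) :
    (f (x + h) - 2 * f x + f (x - h)) / h ^ 2 = Tsm h 2 (deriv (deriv f)) x := by
  have hne : h ≠ 0 := ne_of_gt hh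
  have h21 : (2 : WithTop ℕ∞) = 1 + 1 := by norm_num
  have hf1 : ContDiff ℝ 1 (deriv f) := (contDiff_succ_iff_deriv.mp (h21 ▸ hf)).2.2
  have hdf : ∀ t : ℝ, HasDerivAt f (deriv f t) t := fun t =>
    ((hf.differentiable (by norm_num)) t).hasDerivAt
  have hdf' : ∀ t : ℝ, HasDerivAt (deriv f) (deriv (deriv f) t) t := fun t =>
    ((hf1.differentiable one_ne_zero) t).hasDerivAt
  have hcf'' : Continuous (deriv (deriv f)) := (contDiff_one_iff_deriv.mp hf1).2
  set g : ℝ → ℝ := fun t => deriv (deriv f) t * theta 2 ((x - t)/h) with hgdef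
  have hgc : Continuous g := hcf''.mul (continuous_theta2.comp (by fun_prop))
  have hTsm : Tsm h 2 (deriv (deriv f)) x = (1/h) * ∫ t : ℝ, g t :=
    Tsm_apply h 2 two_ne_zero _ x
  have hsupp : ∀ t ∉ Set.Icc (x - h) (x + h), g t = 0 := by
    intro t ht
    have habs : 1 < |(x - t)/h| := by
      rw [Set.mem_Icc, not_and_or] at ht
      rw [abs_div, abs_of_pos hh, lt_div_iff₀ hh, one_mul]
      rcases ht with ht | ht <;> push_neg at ht <;>
        rcases abs_cases (x - t) with ⟨he, _⟩ | ⟨he, _⟩ <;> rw [he] <;> linarith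
    show deriv (deriv f) t * theta 2 ((x - t)/h) = 0
    rw [theta2_eq, max_eq_right (by linarith), mul_zero]
  have hres : (∫ t : ℝ, g t) = ∫ t in (x-h)..(x+h), g t := by
    rw [← setIntegral_eq_integral_of_forall_compl_eq_zero hsupp,
      intervalIntegral.integral_of_le (by linarith), MeasureTheory.integral_Icc_eq_integral_Ioc]
  have hL : (∫ t in (x-h)..x, g t) = deriv f x - f x / h + f (x - h) / h := by
    have hcong : Set.EqOn g (fun t => deriv (deriv f) t * (1 - (x - t)/h)) (Set.uIcc (x-h) x) := by
      intro t ht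
      rw [Set.uIcc_of_le (by linarith), Set.mem_Icc] at ht
      show deriv (deriv f) t * theta 2 ((x - t)/h) = _
      rw [theta2_eq, abs_of_nonneg (div_nonneg (by linarith) hh.le),
        max_eq_left (by rw [sub_nonneg, div_le_one hh]; linarith)]
    rw [intervalIntegral.integral_congr hcong]
    have hftc := intervalIntegral.integral_eq_sub_of_hasDerivAt
      (f := fun t => deriv f t * (1 - (x - t)/h) - f t / h)
      (f' := fun t => deriv (deriv f) t * (1 - (x - t)/h))
      (a := x - h) (b := x) ?_ ?_
    · rw [hftc]; field_simp; try ring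
    · intro t _
      have h1 : HasDerivAt (fun t : ℝ => 1 - (x - t)/h) (1/h) t := by
        have := (((hasDerivAt_id t).const_sub x).div_const h).const_sub 1
        exact this.congr_deriv (by ring)
      have h2 := ((hdf' t).mul h1).sub ((hdf t).div_const h)
      exact h2.congr_deriv (by ring)
    · exact (hcf''.mul (by fun_prop)).intervalIntegrable _ _
  have hR : (∫ t in x..(x+h), g t) = f (x + h) / h - deriv f x - f x / h := by
    have hcong : Set.EqOn g (fun t => deriv (deriv f) t * (1 - (t - x)/h)) (Set.uIcc x (x+h)) := by
      intro t ht
      rw [Set.uIcc_of_le (by linarith), Set.mem_Icc] at ht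
      show deriv (deriv f) t * theta 2 ((x - t)/h) = _
      have habs : |(x - t)/h| = (t - x)/h := by
        rw [abs_of_nonpos (div_nonpos_of_nonpos_of_nonneg (by linarith) hh.le)]; ring
      rw [theta2_eq, habs, max_eq_left (by rw [sub_nonneg, div_le_one hh]; linarith)]
    rw [intervalIntegral.integral_congr hcong]
    have hftc := intervalIntegral.integral_eq_sub_of_hasDerivAt
      (f := fun t => deriv f t * (1 - (t - x)/h) + f t / h)
      (f' := fun t => deriv (deriv f) t * (1 - (t - x)/h))
      (a := x) (b := x + h) ?_ ?_
    · rw [hftc]; field_simp; try ring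
    · intro t _
      have h1 : HasDerivAt (fun t : ℝ => 1 - (t - x)/h) (-(1/h)) t := by
        have := (((hasDerivAt_id t).sub_const x).div_const h).const_sub 1
        exact this.congr_deriv (by ring)
      have h2 := ((hdf' t).mul h1).add ((hdf t).div_const h)
      exact h2.congr_deriv (by ring)
    · exact (hcf''.mul (by fun_prop)).intervalIntegrable _ _
  rw [hTsm, hres, ← intervalIntegral.integral_add_adjacent_intervals
    (hgc.intervalIntegrable (x-h) x) (hgc.intervalIntegrable x (x+h)), hL, hR]
  field_simp
  try ring

end Base

section Step

lemma Tsm_succ (h : ℝ) (hh : 0 < h) (f : ℝ → ℝ) (hf : Continuous f) (k : ℕ) (hk : k ≠ 0)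
    (x : ℝ) : Tsm h (k+1) f x = ∫ s : ℝ, Tsm h k f (x - h * s) * theta1 s := by
  have hne : h ≠ 0 := ne_of_gt hh
  obtain ⟨m, rfl⟩ : ∃ m, k = m + 1 := ⟨k - 1, by omega⟩
  rw [Tsm_apply h (m+1+1) (by omega)]
  have hth : ∀ y : ℝ, theta (m+1+1) y = ∫ s : ℝ, theta (m+1) (y - s) * theta1 s := by
    intro y; show theta (m+2) y = _; simp [theta]
  -- the integrand as a function on the product space
  set G : ℝ × ℝ → ℝ := fun p => f p.1 * (theta (m+1) ((x - h * p.2 - p.1)/h) * theta1 p.2)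
    with hGdef
  have hGm : AEStronglyMeasurable G ((volume : Measure ℝ).prod volume) := by
    apply Measurable.aestronglyMeasurable
    exact (hf.measurable.comp measurable_fst).mul
      (((measurable_theta (m+1)).comp (by fun_prop)).mul (measurable_theta1.comp measurable_snd))
  have hGint : Integrable G ((volume : Measure ℝ).prod volume) := by
    set A : ℝ := x - h/2 - (m+1)*h/2
    set B : ℝ := x + h/2 + (m+1)*h/2
    obtain ⟨M, hM⟩ := (isCompact_Icc (a := A) (b := B)).exists_bound_of_continuousOn
      hf.continuousOn
    have hM0 : 0 ≤ M := by
      have hmh : 0 ≤ ((m:ℝ)+1) * h/2 := by positivity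
      refine le_trans (norm_nonneg _) (hM x ⟨?_, ?_⟩) <;> simp only [A, B] <;> linarith
    apply Integrable.mono'
      (g := (Set.Icc A B ×ˢ Set.Icc (-(1/2) : ℝ) (1/2)).indicator fun _ => M)
    · apply IntegrableOn.integrable_indicator _ (measurableSet_Icc.prod measurableSet_Icc)
      refine integrableOn_const ?_
      rw [Measure.prod_prod, Real.volume_Icc, Real.volume_Icc]
      exact (ENNReal.mul_lt_top ENNReal.ofReal_lt_top ENNReal.ofReal_lt_top).ne
    · exact hGm
    · filter_upwards with p
      by_cases h1 : theta1 p.2 = 0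
      · rw [hGdef]; simp only [h1, mul_zero, norm_zero]
        exact Set.indicator_nonneg (fun _ _ => hM0) p
      by_cases h2 : theta (m+1) ((x - h * p.2 - p.1)/h) = 0
      · rw [hGdef]; simp only [h2, zero_mul, mul_zero, norm_zero]
        exact Set.indicator_nonneg (fun _ _ => hM0) p
      have hs : |p.2| ≤ 1/2 := abs_le_of_theta1_ne h1
      have htt : |(x - h * p.2 - p.1)/h| ≤ ((m+1 : ℕ) : ℝ)/2 := abs_le_of_theta_ne h2
      have hmem : p ∈ Set.Icc A B ×ˢ Set.Icc (-(1/2) : ℝ) (1/2) := by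
        rw [abs_div, abs_of_pos hh, div_le_div_iff₀ hh (by norm_num : (0:ℝ) < 2)] at htt
        push_cast at htt
        constructor
        · rw [Set.mem_Icc]
          rcases abs_cases (x - h * p.2 - p.1) with ⟨he, _⟩ | ⟨he, _⟩ <;> rw [he] at htt <;>
            rcases abs_cases p.2 with ⟨he2, _⟩ | ⟨he2, _⟩ <;> rw [he2] at hs <;>
            constructor <;> simp only [A, B] <;> nlinarith
        · rw [Set.mem_Icc]; rcases abs_cases p.2 with ⟨he2, _⟩ | ⟨he2, _⟩ <;> rw [he2] at hs <;>
            constructor <;> linarith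
      rw [Set.indicator_of_mem hmem]
      calc ‖G p‖ = ‖f p.1‖ * (|theta (m+1) ((x - h * p.2 - p.1)/h)| * |theta1 p.2|) := by
            rw [hGdef]; simp [norm_mul, abs_mul]
        _ ≤ M * (1 * 1) := by
            apply mul_le_mul (hM p.1 hmem.1) _ (by positivity) hM0
            apply mul_le_mul _ _ (abs_nonneg _) zero_le_one
            · rw [abs_of_nonneg (theta_mem_Icc _ _).1]; exact (theta_mem_Icc _ _).2
            · rw [abs_of_nonneg (theta1_nonneg _)]; exact theta1_le_one _
        _ = M := by ring
  -- now compute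
  have step1 : (∫ t : ℝ, f t * theta (m+1+1) ((x - t)/h))
      = ∫ t : ℝ, ∫ s : ℝ, G (t, s) := by
    congr 1; funext t
    rw [hth ((x - t)/h), ← integral_const_mul]
    congr 1; funext s
    rw [hGdef]
    have : (x - t)/h - s = (x - h * s - t)/h := by field_simp; ring
    rw [this]
  have step2 : (∫ t : ℝ, ∫ s : ℝ, G (t, s)) = ∫ s : ℝ, ∫ t : ℝ, G (t, s) :=
    integral_integral_swap hGint
  rw [step1, step2]
  have step3 : ∀ s : ℝ, (∫ t : ℝ, G (t, s))
      = (∫ t : ℝ, f t * theta (m+1) ((x - h * s - t)/h)) * theta1 s := by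
    intro s
    rw [← integral_mul_const]
    congr 1; funext t
    rw [hGdef]; ring
  simp_rw [step3]
  rw [← integral_const_mul]
  congr 1; funext s
  rw [Tsm_apply h (m+1) (by omega)]
  ring

end Step

lemma Tsm_step (h : ℝ) (hh : 0 < h) (f : ℝ → ℝ) (hf : Continuous f) (k : ℕ) (x : ℝ) :
    Tsm h (k+1) f x = ∫ s : ℝ, Tsm h k f (x - h * s) * theta1 s := by
  rcases eq_or_ne k 0 with rfl | hk
  · rw [Tsm_zero]
    exact Tsm_one_rep h hh f x
  · exact Tsm_succ h hh f hf k hk x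

/-- The second central difference quotient of T^{h,j-2} f equals T^{h,j} f''. -/
theorem stmt19 (j : ℕ) (hj : 2 ≤ j) (h : ℝ) (hh : 0 < h) (f : ℝ → ℝ)
    (hf : ContDiff ℝ 2 f) (x : ℝ) :
    (Tsm h (j-2) f (x + h) - 2 * Tsm h (j-2) f x + Tsm h (j-2) f (x - h)) / h ^ 2
      = Tsm h j (deriv (deriv f)) x := by
  induction j, hj using Nat.le_induction generalizing x with
  | base =>
    show (Tsm h 0 f (x + h) - 2 * Tsm h 0 f x + Tsm h 0 f (x - h)) / h ^ 2 = _
    rw [Tsm_zero]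
    exact base_case h hh f hf x
  | succ j hj IH =>
    obtain ⟨k, rfl⟩ : ∃ k, j = k + 2 := ⟨j - 2, by omega⟩
    have hfc : Continuous f := hf.continuous
    have h21 : (2 : WithTop ℕ∞) = 1 + 1 := by norm_num
    have hf1 : ContDiff ℝ 1 (deriv f) := (contDiff_succ_iff_deriv.mp (h21 ▸ hf)).2.2
    have hcf'' : Continuous (deriv (deriv f)) := (contDiff_one_iff_deriv.mp hf1).2
    show (Tsm h (k+1) f (x + h) - 2 * Tsm h (k+1) f x + Tsm h (k+1) f (x - h)) / h ^ 2
      = Tsm h (k+3) (deriv (deriv f)) x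
    rw [Tsm_step h hh f hfc k (x + h), Tsm_step h hh f hfc k x, Tsm_step h hh f hfc k (x - h),
      show k + 3 = (k + 2) + 1 from rfl, Tsm_step h hh _ hcf'' (k+2) x]
    have i1 := integrable_Tsm_slice h hh f hfc k (x + h)
    have i2 := integrable_Tsm_slice h hh f hfc k x
    have i3 := integrable_Tsm_slice h hh f hfc k (x - h)
    have i12 : Integrable (fun s : ℝ => Tsm h k f (x + h - h * s) * theta1 s
        - 2 * (Tsm h k f (x - h * s) * theta1 s)) volume := i1.sub (i2.const_mul 2)
    rw [← integral_const_mul 2 (fun s => Tsm h k f (x - h * s) * theta1 s),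
      ← integral_sub i1 (i2.const_mul 2),
      ← integral_add i12 i3, ← integral_div]
    congr 1
    funext s
    have hIH := IH (x - h * s)
    have e1 : x + h - h * s = x - h * s + h := by ring
    have e2 : x - h - h * s = x - h * s - h := by ring
    rw [e1, e2]
    have hIH' : (Tsm h k f (x - h * s + h) - 2 * Tsm h k f (x - h * s)
        + Tsm h k f (x - h * s - h)) / h ^ 2 = Tsm h (k+2) (deriv (deriv f)) (x - h * s) := hIH
    rw [← hIH']
    ring
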